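/- Let F : (0,∞) → (0,∞) and n₀ ∈ ℕ⁺ be such that F is nondecreasing on {t : t ≥ n₀} and for all real t ≥ n₀: F(t) ≥ t + 2 and for every c ∈ ℕ⁺, c·F(t) ≥ F(c·t). Let S ⊆ ℕ⁺ be F-nongappy and contain at least one element of binary length ≥ n₀. Let c₁ be the least element of S with |c₁| ≥ n₀, and set λ = 4 + |c₁|. Recursively define, for each integer n ≥ 2: b_n = Σ_{ℓ=1}^{n−1} c_ℓ·C(n,ℓ); a_n = the least element of S with a_n ≥ b_n (such an element exists, since an F-nongappy set is unbounded); and c_n = a_n − b_n. Then for every integer i ≥ 2, |c_i| ≤ (i−1)·F^[i−1](λ). -/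

import Mathlib

/-- The binary length of `m`, i.e. `⌊log₂ m⌋ + 1` for `m ≥ 1`. -/
def blen (m : ℕ) : ℕ := Nat.log 2 m + 1

lemma blen_mono {m n : ℕ} (h : m ≤ n) : blen m ≤ blen n :=
  Nat.succ_le_succ (Nat.log_mono_right h)

lemma lt_two_pow_blen (m : ℕ) : m < 2 ^ blen m :=
  Nat.lt_pow_succ_log_self (by norm_num) m

lemma blen_le_of_lt_pow {m k : ℕ} (hm : m ≠ 0) (h : m < 2 ^ k) : blen m ≤ k :=
  Nat.log_lt_of_lt_pow hm h

theorem stmt11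
    (F : ℝ → ℝ) (hFpos : ∀ t : ℝ, 0 < t → 0 < F t)
    (n₀ : ℕ) (hn₀ : 1 ≤ n₀)
    (hFmono : ∀ s t : ℝ, (n₀ : ℝ) ≤ s → s ≤ t → F s ≤ F t)
    (hF2 : ∀ t : ℝ, (n₀ : ℝ) ≤ t → t + 2 ≤ F t)
    (hFc : ∀ t : ℝ, (n₀ : ℝ) ≤ t → ∀ c : ℕ, 1 ≤ c → F ((c : ℝ) * t) ≤ (c : ℝ) * F t)
    (S : Set ℕ) (hSpos : ∀ m ∈ S, 1 ≤ m)
    -- S is F-nongappy: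
    (hSne : S.Nonempty)
    (hSng : ∀ m ∈ S, ∃ m' ∈ S, m < m' ∧ (blen m' : ℝ) ≤ F (blen m))
    (a b c : ℕ → ℕ)
    -- c 1 is the least element of S of binary length ≥ n₀ (one exists):
    (hc1mem : c 1 ∈ S) (hc1len : n₀ ≤ blen (c 1))
    (hc1least : ∀ s ∈ S, n₀ ≤ blen s → c 1 ≤ s)
    -- the recurrences defining b n, a n, and c n for n ≥ 2:
    (hb : ∀ n : ℕ, 2 ≤ n → b n = ∑ ℓ ∈ Finset.Ico 1 n, c ℓ * Nat.choose n ℓ)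
    (ha : ∀ n : ℕ, 2 ≤ n → a n ∈ S ∧ b n ≤ a n ∧ ∀ s ∈ S, b n ≤ s → a n ≤ s)
    (hc : ∀ n : ℕ, 2 ≤ n → c n = a n - b n)
    (i : ℕ) (hi : 2 ≤ i) :
    (blen (c i) : ℝ) ≤ ((i : ℝ) - 1) * F^[i - 1] (4 + (blen (c 1) : ℝ)) := by
  classical
  set L : ℝ := 4 + (blen (c 1) : ℝ) with hLdef
  have hc1pos : 1 ≤ c 1 := hSpos _ hc1mem
  have hn₀L : (n₀ : ℝ) ≤ L := by
    have h1 : (n₀ : ℝ) ≤ (blen (c 1) : ℝ) := by exact_mod_cast hc1len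
    simp only [hLdef]; linarith
  -- iterates grow at least linearly
  have hiter : ∀ k : ℕ, L + 2 * k ≤ F^[k] L := by
    intro k
    induction k with
    | zero => simp
    | succ k ih =>
      have h1 : (n₀ : ℝ) ≤ F^[k] L := by
        have : (0:ℝ) ≤ (k:ℝ) := Nat.cast_nonneg k
        linarith
      have h2 := hF2 _ h1
      rw [Function.iterate_succ_apply']
      push_cast
      linarith
  have hgen₀ : ∀ k : ℕ, (n₀ : ℝ) ≤ F^[k] L := by
    intro k
    have : (0:ℝ) ≤ (k:ℝ) := Nat.cast_nonneg k
    have := hiter k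
    linarith
  have hmonoIter : ∀ k l : ℕ, k ≤ l → F^[k] L ≤ F^[l] L := by
    intro k l h
    induction l, h using Nat.le_induction with
    | base => exact le_refl _
    | succ l hl ih =>
      have h2 := hF2 _ (hgen₀ l)
      rw [Function.iterate_succ_apply']
      linarith
  -- b n is at least c 1 * n
  have hbnlb : ∀ n : ℕ, 2 ≤ n → c 1 * n ≤ b n := by
    intro n hn
    rw [hb n hn]
    have h1 : (1:ℕ) ∈ Finset.Ico 1 n := by
      simp only [Finset.mem_Ico]; omega
    calc c 1 * n = c 1 * Nat.choose n 1 := by rw [Nat.choose_one_right]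
      _ ≤ ∑ ℓ ∈ Finset.Ico 1 n, c ℓ * Nat.choose n ℓ :=
        Finset.single_le_sum (f := fun j => c j * Nat.choose n j) (fun _ _ => Nat.zero_le _) h1
  have hc1ltb : ∀ n : ℕ, 2 ≤ n → c 1 < b n := by
    intro n hn
    have h1 := hbnlb n hn
    calc c 1 < c 1 * 2 := by omega
      _ ≤ c 1 * n := Nat.mul_le_mul_left _ hn
      _ ≤ b n := h1
  -- key step: blen (a n) ≤ F (blen (b n))
  have hstep : ∀ n : ℕ, 2 ≤ n → (blen (a n) : ℝ) ≤ F (blen (b n)) := by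
    intro n hn
    obtain ⟨haS, hab, hleast⟩ := ha n hn
    set T := (Finset.range (b n)).filter (fun s => s ∈ S) with hT
    have hc1T : c 1 ∈ T := by
      simp only [hT, Finset.mem_filter, Finset.mem_range]
      exact ⟨hc1ltb n hn, hc1mem⟩
    have hTne : T.Nonempty := ⟨_, hc1T⟩
    set m := T.max' hTne with hm
    have hmT : m ∈ T := T.max'_mem hTne
    have hmS : m ∈ S := by
      have := hmT; simp only [hT, Finset.mem_filter] at this; exact this.2
    have hmlt : m < b n := by
      have := hmT; simp only [hT, Finset.mem_filter, Finset.mem_range] at this; exact this.1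
    have hc1m : c 1 ≤ m := T.le_max' _ hc1T
    obtain ⟨m', hm'S, hmm', hm'len⟩ := hSng m hmS
    have hbn_le_m' : b n ≤ m' := by
      by_contra h
      push_neg at h
      have hm'T : m' ∈ T := by
        simp only [hT, Finset.mem_filter, Finset.mem_range]
        exact ⟨h, hm'S⟩
      have := T.le_max' m' hm'T
      omega
    have ham' : a n ≤ m' := hleast m' hm'S hbn_le_m'
    have h1 : (blen (a n) : ℝ) ≤ (blen m' : ℝ) := by
      exact_mod_cast blen_mono ham'
    have hn₀m : (n₀ : ℝ) ≤ (blen m : ℝ) := by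
      have : n₀ ≤ blen m := hc1len.trans (blen_mono hc1m)
      exact_mod_cast this
    have h3 : F (blen m) ≤ F (blen (b n)) := by
      apply hFmono _ _ hn₀m
      exact_mod_cast blen_mono hmlt.le
    linarith
  -- main strong induction
  have main : ∀ i : ℕ, 2 ≤ i → (blen (c i) : ℝ) ≤ ((i : ℝ) - 1) * F^[i - 1] L := by
    intro i
    induction i using Nat.strong_induction_on with
    | _ i IH =>
      intro hi
      set X : ℝ := F^[i - 2] L with hXdef
      have hXL : L ≤ X := by
        have := hiter (i - 2)
        have : (0:ℝ) ≤ ((i-2 : ℕ):ℝ) := Nat.cast_nonneg _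
        have h := hiter (i - 2)
        linarith
      have hXpos : (0:ℝ) < X := by
        have : (0:ℝ) < L := by
          have : (0:ℝ) ≤ (blen (c 1) : ℝ) := Nat.cast_nonneg _
          simp only [hLdef]; linarith
        linarith
      -- bound on blen (b i)
      have hne : (Finset.Ico 1 i).Nonempty := ⟨1, by simp only [Finset.mem_Ico]; omega⟩
      set M := (Finset.Ico 1 i).sup' hne c with hMdef
      obtain ⟨ℓ, hℓmem, hMeq⟩ := Finset.exists_mem_eq_sup' hne c
      have hbM : b i ≤ M * 2 ^ i := by
        rw [hb i hi]
        calc ∑ j ∈ Finset.Ico 1 i, c j * Nat.choose i j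
            ≤ ∑ j ∈ Finset.Ico 1 i, M * Nat.choose i j := by
              apply Finset.sum_le_sum
              intro j hj
              exact Nat.mul_le_mul_right _ (Finset.le_sup' c hj)
          _ = M * ∑ j ∈ Finset.Ico 1 i, Nat.choose i j := by rw [Finset.mul_sum]
          _ ≤ M * ∑ j ∈ Finset.range (i+1), Nat.choose i j := by
              apply Nat.mul_le_mul_left
              apply Finset.sum_le_sum_of_subset
              intro j hj
              simp only [Finset.mem_Ico] at hj
              simp only [Finset.mem_range]
              omega
          _ = M * 2 ^ i := by rw [Nat.sum_range_choose]
      have hbipos : 0 < b i := by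
        have := hc1ltb i hi
        omega
      have hblenb : blen (b i) ≤ blen M + i := by
        apply blen_le_of_lt_pow hbipos.ne'
        calc b i ≤ M * 2 ^ i := hbM
          _ < 2 ^ blen M * 2 ^ i :=
            Nat.mul_lt_mul_of_lt_of_le (lt_two_pow_blen M) le_rfl (Nat.pow_pos (by norm_num))
          _ = 2 ^ (blen M + i) := by rw [pow_add]
      -- real bound on blen M
      have hMbound : (blen M : ℝ) ≤ ((i:ℝ) - 2) * X + (blen (c 1) : ℝ) := by
        rw [hMdef, hMeq]
        simp only [Finset.mem_Ico] at hℓmem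
        have hi2 : (0:ℝ) ≤ (i:ℝ) - 2 := by
          have : (2:ℝ) ≤ (i:ℝ) := by exact_mod_cast hi
          linarith
        by_cases hℓ1 : ℓ = 1
        · subst hℓ1
          nlinarith
        · have hℓ2 : 2 ≤ ℓ := by omega
          have hIH := IH ℓ hℓmem.2 hℓ2
          have hiter_le : F^[ℓ - 1] L ≤ X := hmonoIter _ _ (by omega)
          have hℓi : (ℓ:ℝ) - 1 ≤ (i:ℝ) - 2 := by
            have : ℓ + 1 ≤ i := by omega
            have : ((ℓ:ℝ)) + 1 ≤ (i:ℝ) := by exact_mod_cast this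
            linarith
          have hℓpos : (0:ℝ) ≤ (ℓ:ℝ) - 1 := by
            have : (1:ℝ) ≤ (ℓ:ℝ) := by exact_mod_cast hℓmem.1
            linarith
          have hFℓpos : 0 < F^[ℓ-1] L := by
            have := hiter (ℓ-1)
            have : (0:ℝ) ≤ ((ℓ-1:ℕ):ℝ) := Nat.cast_nonneg _
            nlinarith [hiter (ℓ-1)]
          have h1 : ((ℓ:ℝ) - 1) * F^[ℓ-1] L ≤ ((i:ℝ) - 2) * X := by
            apply mul_le_mul hℓi hiter_le (le_of_lt hFℓpos) hi2
          have h2 : (0:ℝ) ≤ (blen (c 1) : ℝ) := Nat.cast_nonneg _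
          linarith
      -- real bound on blen (b i)
      have hbbR : (blen (b i) : ℝ) ≤ ((i:ℝ) - 1) * X := by
        have h1 : (blen (b i) : ℝ) ≤ (blen M : ℝ) + (i:ℝ) := by exact_mod_cast hblenb
        have h2 : (blen (c 1) : ℝ) + (i:ℝ) ≤ X := by
          have h3 := hiter (i - 2)
          have h4 : ((i - 2 : ℕ) : ℝ) = (i:ℝ) - 2 := by
            have : (2:ℝ) ≤ (i:ℝ) := by exact_mod_cast hi
            push_cast [Nat.cast_sub hi]
            ring
          rw [h4] at h3
          simp only [hLdef] at h3 ⊢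
          linarith
        have heq : ((i:ℝ) - 1) * X = ((i:ℝ) - 2) * X + X := by ring
        linarith
      -- apply F and finish
      have hn₀b : (n₀ : ℝ) ≤ (blen (b i) : ℝ) := by
        have : n₀ ≤ blen (b i) := hc1len.trans (blen_mono (hc1ltb i hi).le)
        exact_mod_cast this
      have h4 : F (blen (b i)) ≤ F (((i:ℝ) - 1) * X) := hFmono _ _ hn₀b hbbR
      have h5 : F (((i:ℝ) - 1) * X) ≤ ((i:ℝ) - 1) * F X := by
        have := hFc X (hgen₀ (i - 2)) (i - 1) (by omega)
        have hcast : ((i - 1 : ℕ) : ℝ) = (i:ℝ) - 1 := by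
          push_cast [Nat.cast_sub (by omega : 1 ≤ i)]
          ring
        rwa [hcast] at this
      have h6 : F X = F^[i - 1] L := by
        have heq : i - 1 = (i - 2) + 1 := by omega
        rw [heq, Function.iterate_succ_apply']
      have h7 : (blen (c i) : ℝ) ≤ (blen (a i) : ℝ) := by
        have hcai : c i ≤ a i := by rw [hc i hi]; omega
        exact_mod_cast blen_mono hcai
      have h8 := hstep i hi
      rw [← h6]
      linarith
  exact main i hi
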